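/- In a simple probabilistic relation under an injective scoring function, raising the probability of a tuple t to p'(t) > p(t) scales any other tuple's Global-Topk probability by a factor of at most p'(t)/p(t): for all t' ≠ t, P'_k(t') ≤ (p'(t)/p(t)) · P_k(t'). Combined with P'_k(t) = (p'(t)/p(t))·P_k(t), this implies that a winner (a tuple among the k largest Global-Topk probabilities) remains a winner after raising its probability (Stability for probability increase). -/

import Mathlib

open Finset

/-- Raising the probability of a tuple `t₀` scales any other tuple's Global-Topk
probability by a factor of at most `p' t₀ / p t₀`; together with the exact
scaling of `t₀`'s own Global-Topk probability this implies that a winner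
(a tuple among the `k` largest Global-Topk probabilities) remains a winner. -/
theorem globalTopk_stability_prob_increase (n : ℕ) (p p' : ℕ → ℝ) (t0 : ℕ)
    (ht0 : t0 ∈ Finset.Icc 1 n)
    (hp : ∀ i ∈ Finset.Icc 1 n, p i ∈ Set.Ioo (0 : ℝ) 1)
    (hp' : ∀ i ∈ Finset.Icc 1 n, p' i ∈ Set.Ioo (0 : ℝ) 1)
    (hraise : p t0 < p' t0)
    (hagree : ∀ j, j ≠ t0 → p' j = p j)
    (q : (ℕ → ℝ) → ℕ → ℕ → ℝ)
    (hq : ∀ f k i, q f k i =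
      ∑ W ∈ (Finset.Icc 1 n).powerset.filter
          (fun W => i ∈ W ∧ (W.filter (fun j => j < i)).card < k),
        (∏ j ∈ W, f j) * ∏ j ∈ Finset.Icc 1 n \ W, (1 - f j))
    (k : ℕ) :
    (∀ t' ∈ Finset.Icc 1 n, t' ≠ t0 → q p' k t' ≤ (p' t0 / p t0) * q p k t') ∧
    (((Finset.Icc 1 n).filter (fun t'' => q p k t0 < q p k t'')).card < k →
      ((Finset.Icc 1 n).filter (fun t'' => q p' k t0 < q p' k t'')).card < k) := by
  have hpt0 := hp t0 ht0
  have hpt0' := hp' t0 ht0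
  have hp0pos : (0:ℝ) < p t0 := hpt0.1
  have hp0lt1 : p t0 < 1 := hpt0.2
  have hc1 : (1:ℝ) ≤ p' t0 / p t0 := by
    rw [le_div_iff₀ hp0pos]; linarith
  have hcpos : (0:ℝ) < p' t0 / p t0 := lt_of_lt_of_le one_pos hc1
  -- nonnegativity of weights
  have hwnn : ∀ W : Finset ℕ, W ⊆ Finset.Icc 1 n →
      0 ≤ (∏ j ∈ W, p j) * ∏ j ∈ Finset.Icc 1 n \ W, (1 - p j) := by
    intro W hW
    apply mul_nonneg
    · exact Finset.prod_nonneg fun j hj => (hp j (hW hj)).1.le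
    · refine Finset.prod_nonneg fun j hj => ?_
      have := hp j (Finset.mem_sdiff.mp hj).1
      linarith [this.2]
  -- exact scaling when t0 ∈ W
  have keyEq : ∀ W : Finset ℕ, W ⊆ Finset.Icc 1 n → t0 ∈ W →
      (∏ j ∈ W, p' j) * ∏ j ∈ Finset.Icc 1 n \ W, (1 - p' j)
        = (p' t0 / p t0) * ((∏ j ∈ W, p j) * ∏ j ∈ Finset.Icc 1 n \ W, (1 - p j)) := by
    intro W hW ht
    have h1 : ∏ j ∈ W, p' j = (p' t0 / p t0) * ∏ j ∈ W, p j := by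
      rw [← Finset.mul_prod_erase W p' ht, ← Finset.mul_prod_erase W p ht,
        Finset.prod_congr rfl (fun j hj => hagree j (Finset.mem_erase.mp hj).1)]
      field_simp
    have h2 : ∏ j ∈ Finset.Icc 1 n \ W, (1 - p' j)
        = ∏ j ∈ Finset.Icc 1 n \ W, (1 - p j) := by
      refine Finset.prod_congr rfl fun j hj => ?_
      have hne : j ≠ t0 := fun h => ((Finset.mem_sdiff.mp hj).2 (h ▸ ht))
      rw [hagree j hne]
    rw [h1, h2]; ring
  -- inequality for all W
  have key : ∀ W : Finset ℕ, W ⊆ Finset.Icc 1 n →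
      (∏ j ∈ W, p' j) * ∏ j ∈ Finset.Icc 1 n \ W, (1 - p' j)
        ≤ (p' t0 / p t0) * ((∏ j ∈ W, p j) * ∏ j ∈ Finset.Icc 1 n \ W, (1 - p j)) := by
    intro W hW
    by_cases ht : t0 ∈ W
    · exact le_of_eq (keyEq W hW ht)
    · have h1 : ∏ j ∈ W, p' j = ∏ j ∈ W, p j := by
        refine Finset.prod_congr rfl fun j hj => ?_
        exact hagree j (fun h => ht (h ▸ hj))
      have ht' : t0 ∈ Finset.Icc 1 n \ W := Finset.mem_sdiff.mpr ⟨ht0, ht⟩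
      have h2 : ∏ j ∈ Finset.Icc 1 n \ W, (1 - p' j)
          = ((1 - p' t0) / (1 - p t0)) * ∏ j ∈ Finset.Icc 1 n \ W, (1 - p j) := by
        rw [← Finset.mul_prod_erase _ (fun j => 1 - p' j) ht',
          ← Finset.mul_prod_erase _ (fun j => 1 - p j) ht',
          Finset.prod_congr rfl (fun j hj => by rw [hagree j (Finset.mem_erase.mp hj).1])]
        have : (1:ℝ) - p t0 ≠ 0 := by linarith
        field_simp
      rw [h1, h2]
      have hwn := hwnn W hW
      have hr1 : (1 - p' t0) / (1 - p t0) ≤ 1 := by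
        rw [div_le_one (by linarith)]; linarith
      calc (∏ j ∈ W, p j) * ((1 - p' t0) / (1 - p t0) * ∏ j ∈ Finset.Icc 1 n \ W, (1 - p j))
          = ((1 - p' t0) / (1 - p t0)) * ((∏ j ∈ W, p j) * ∏ j ∈ Finset.Icc 1 n \ W, (1 - p j)) := by ring
        _ ≤ 1 * ((∏ j ∈ W, p j) * ∏ j ∈ Finset.Icc 1 n \ W, (1 - p j)) :=
            mul_le_mul_of_nonneg_right hr1 hwn
        _ ≤ (p' t0 / p t0) * ((∏ j ∈ W, p j) * ∏ j ∈ Finset.Icc 1 n \ W, (1 - p j)) :=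
            mul_le_mul_of_nonneg_right hc1 hwn
  -- exact scaling of q at t0
  have hqt0 : q p' k t0 = (p' t0 / p t0) * q p k t0 := by
    rw [hq, hq, Finset.mul_sum]
    refine Finset.sum_congr rfl fun W hW => ?_
    rw [Finset.mem_filter, Finset.mem_powerset] at hW
    exact keyEq W hW.1 hW.2.1
  constructor
  · intro t' _ _
    rw [hq, hq, Finset.mul_sum]
    refine Finset.sum_le_sum fun W hW => ?_
    rw [Finset.mem_filter, Finset.mem_powerset] at hW
    exact key W hW.1
  · intro h
    refine lt_of_le_of_lt (Finset.card_le_card ?_) h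
    intro t'' ht''
    rw [Finset.mem_filter] at ht'' ⊢
    obtain ⟨hmem, hlt⟩ := ht''
    refine ⟨hmem, ?_⟩
    have hne : t'' ≠ t0 := by
      intro h'; subst h'; exact lt_irrefl _ hlt
    have hub : q p' k t'' ≤ (p' t0 / p t0) * q p k t'' := by
      rw [hq, hq, Finset.mul_sum]
      refine Finset.sum_le_sum fun W hW => ?_
      rw [Finset.mem_filter, Finset.mem_powerset] at hW
      exact key W hW.1
    have : (p' t0 / p t0) * q p k t0 < (p' t0 / p t0) * q p k t'' := by
      calc (p' t0 / p t0) * q p k t0 = q p' k t0 := hqt0.symm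
        _ < q p' k t'' := hlt
        _ ≤ (p' t0 / p t0) * q p k t'' := hub
    exact lt_of_mul_lt_mul_left this hcpos.le
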